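/- The square Q₁ := conv{(1,0),(0,1),(−1,0),(0,−1)} ⊂ ℝ² satisfies Q₁ = conv{(0,0),(1,1)} + conv{(0,−1),(−1,0)} (Minkowski sum), and, up to translating the summands and reordering them, this is the unique Minkowski decomposition of Q₁ into lattice polytopes none of which is a single point. -/

import Mathlib

open Set Pointwise

noncomputable section

/-- We work in the plane `ℝ × ℝ`. -/
abbrev V : Type := ℝ × ℝ

/-- The embedding of the lattice `ℤ × ℤ` into the plane. -/
def toR (p : ℤ × ℤ) : V := ((p.1 : ℝ), (p.2 : ℝ))

/-- The set of lattice points of the plane. -/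
def latticePoints : Set V := Set.range toR

/-- A lattice polytope: the convex hull of a nonempty finite set of lattice points. -/
def IsLatticePolytope (P : Set V) : Prop :=
  ∃ S : Finset (ℤ × ℤ), S.Nonempty ∧ P = convexHull ℝ (toR '' ↑S)

/-- A toric diagram: a two-dimensional lattice polytope such that every lattice point on its
topological boundary is an extreme point. -/
def IsToricDiagram (P : Set V) : Prop :=
  IsLatticePolytope P ∧ (interior P).Nonempty ∧
    ∀ x ∈ frontier P, x ∈ latticePoints → x ∈ P.extremePoints ℝ

/-- A lattice segment: the convex hull of two distinct lattice points. -/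
def IsLatticeSegment (L : Set V) : Prop :=
  ∃ a b : ℤ × ℤ, a ≠ b ∧ L = segment ℝ (toR a) (toR b)

/-- A lattice triangle: the convex hull of three affinely independent lattice points. -/
def IsLatticeTriangle (T : Set V) : Prop :=
  ∃ a b c : ℤ × ℤ, AffineIndependent ℝ ![toR a, toR b, toR c] ∧
    T = convexHull ℝ {toR a, toR b, toR c}

/-- `E` is an edge of `P`: a maximal (nondegenerate) line segment contained in the
topological boundary of `P`. -/
def IsEdge (P E : Set V) : Prop :=
  (∃ a b : V, a ≠ b ∧ E = segment ℝ a b) ∧ E ⊆ frontier P ∧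
    ∀ F : Set V, (∃ a b : V, F = segment ℝ a b) → F ⊆ frontier P → E ⊆ F → F = E

/-- `v` is an edge vector of `P` (the difference of the endpoints of some edge of `P`). -/
def IsEdgeVector (P : Set V) (v : V) : Prop :=
  ∃ a b : V, a ≠ b ∧ IsEdge P (segment ℝ a b) ∧ v = b - a

/-- Two plane vectors are parallel when their cross product vanishes. -/
def Par (v w : V) : Prop := v.1 * w.2 = v.2 * w.1

/-- `P` admits a lattice maximal Minkowski decomposition: `P` is a Minkowski sum of at
least two lattice polytopes, each of which is a lattice segment or a lattice triangle. -/
def HasLatticeMaximalDecomposition (P : Set V) : Prop :=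
  ∃ (m : ℕ) (Ps : Fin (m + 1) → Set V), 1 ≤ m ∧
    P = ∑ k, Ps k ∧ ∀ k, IsLatticeSegment (Ps k) ∨ IsLatticeTriangle (Ps k)

/-- A convex polytope: the convex hull of a nonempty finite set of points. -/
def IsConvexPolytope (A : Set V) : Prop :=
  ∃ S : Finset V, S.Nonempty ∧ A = convexHull ℝ (↑S : Set V)

/-- `A` is a homothet `λ • P + t` (`λ > 0`) of `P`. -/
def IsHomothet (A P : Set V) : Prop :=
  ∃ (l : ℝ) (t : V), 0 < l ∧ A = (fun x => l • x + t) '' P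

/-- A (nondegenerate) line segment. -/
def IsSegmentSet (A : Set V) : Prop := ∃ a b : V, a ≠ b ∧ A = segment ℝ a b

/-- A triangle: the convex hull of three affinely independent points. -/
def IsTriangleSet (A : Set V) : Prop :=
  ∃ a b c : V, AffineIndependent ℝ ![a, b, c] ∧ A = convexHull ℝ {a, b, c}

/-- A convex polytope is Minkowski-indecomposable if in every Minkowski decomposition
into two convex polytopes, one of the summands is a point or a homothet of the polytope. -/
def MinkowskiIndecomposable (Q : Set V) : Prop :=
  ∀ A B : Set V, IsConvexPolytope A → IsConvexPolytope B → Q = A + B →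
    (∃ x, A = {x}) ∨ IsHomothet A Q ∨ (∃ x, B = {x}) ∨ IsHomothet B Q

/-- A parallelogram: a quadrilateral whose vertices `v₁ v₂ v₃ v₄` in cyclic order satisfy
`v₁ + v₃ = v₂ + v₄`. -/
def IsParallelogram (P : Set V) : Prop :=
  ∃ w : Fin 4 → V, Function.Injective w ∧ P.extremePoints ℝ = Set.range w ∧
    w 0 + w 2 = w 1 + w 3

/-- The Gauntlett–Martelli–Sparks–Waldram toric diagram `𝒴^{p,q}`. -/
def GMSW (p q : ℤ) : Set V :=
  convexHull ℝ (toR '' ({(0, 0), (1, 0), (p, p), (p - q - 1, p - q)} : Set (ℤ × ℤ)))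

/-- Cross product of lattice vectors. -/
def crossZ (u w : ℤ × ℤ) : ℤ := u.1 * w.2 - u.2 * w.1

/-- The square `Q₁ = conv{(1,0),(0,1),(−1,0),(0,−1)}`. -/
def sq18 : Set V :=
  convexHull ℝ {((1 : ℝ), (0 : ℝ)), ((0 : ℝ), (1 : ℝ)), ((-1 : ℝ), (0 : ℝ)),
    ((0 : ℝ), (-1 : ℝ))}

/-- The summand `conv{(0,0),(1,1)}`. -/
def seg18a : Set V := segment ℝ ((0 : ℝ), (0 : ℝ)) ((1 : ℝ), (1 : ℝ))

/-- The summand `conv{(0,−1),(−1,0)}`. -/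
def seg18b : Set V := segment ℝ ((0 : ℝ), (-1 : ℝ)) ((-1 : ℝ), (0 : ℝ))

namespace St18

/-! ### Integer support-function machinery -/

/-- maximum of `g` over finset `S` is `M` -/
def MaxAt (g : ℤ × ℤ → ℤ) (S : Finset (ℤ × ℤ)) (M : ℤ) : Prop :=
  (∀ p ∈ S, g p ≤ M) ∧ ∃ p ∈ S, g p = M

def Additive' (g : ℤ × ℤ → ℤ) : Prop := ∀ a b, g (a + b) = g a + g b

theorem Additive'.zero {g} (hg : Additive' g) : g 0 = 0 := by
  have := hg 0 0; simp at this; omega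

theorem maxAt_unique {g S M N} (h1 : MaxAt g S M) (h2 : MaxAt g S N) : M = N := by
  obtain ⟨b1, ⟨p, hp, hpe⟩⟩ := h1
  obtain ⟨b2, ⟨q, hq, hqe⟩⟩ := h2
  have := b1 q hq; have := b2 p hp; omega

theorem exists_maxAt (g : ℤ × ℤ → ℤ) {S : Finset (ℤ × ℤ)} (h : S.Nonempty) :
    ∃ M, MaxAt g S M := by
  refine ⟨S.sup' h g, fun p hp => Finset.le_sup' g hp, ?_⟩
  obtain ⟨p, hp, hpe⟩ := Finset.exists_mem_eq_sup' h g
  exact ⟨p, hp, hpe.symm⟩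

theorem maxAt_add {g A B Ma Mb} (hg : Additive' g)
    (ha : MaxAt g A Ma) (hb : MaxAt g B Mb) : MaxAt g (A + B) (Ma + Mb) := by
  constructor
  · intro p hp
    rw [Finset.mem_add] at hp
    obtain ⟨a, haA, b, hbB, rfl⟩ := hp
    have := ha.1 a haA; have := hb.1 b hbB; rw [hg]; omega
  · obtain ⟨a, haA, hae⟩ := ha.2
    obtain ⟨b, hbB, hbe⟩ := hb.2
    exact ⟨a + b, Finset.mem_add.2 ⟨a, haA, b, hbB, rfl⟩, by rw [hg]; omega⟩

theorem maxAt_sum {ι : Type} {g} (hg : Additive' g) (s : Finset ι)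
    (S : ι → Finset (ℤ × ℤ)) (M : ι → ℤ) (h : ∀ k ∈ s, MaxAt g (S k) (M k)) :
    MaxAt g (∑ k ∈ s, S k) (∑ k ∈ s, M k) := by
  induction s using Finset.cons_induction with
  | empty =>
    simp only [Finset.sum_empty]
    exact ⟨fun p hp => by rw [Finset.mem_zero] at hp; subst hp; rw [hg.zero],
      ⟨0, Finset.mem_zero.2 rfl, hg.zero⟩⟩
  | cons a s has ih =>
    rw [Finset.sum_cons, Finset.sum_cons]
    exact maxAt_add hg (h a (Finset.mem_cons_self a s))
      (ih fun k hk => h k (Finset.mem_cons_of_mem hk))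

/-- the face of `S` in direction `g` at level `M` -/
def face (g : ℤ × ℤ → ℤ) (S : Finset (ℤ × ℤ)) (M : ℤ) : Finset (ℤ × ℤ) :=
  S.filter (fun p => g p = M)

theorem face_nonempty {g S M} (h : MaxAt g S M) : (face g S M).Nonempty := by
  obtain ⟨p, hp, hpe⟩ := h.2
  exact ⟨p, Finset.mem_filter.2 ⟨hp, hpe⟩⟩

theorem face_subset {g S M} : face g S M ⊆ S := Finset.filter_subset _ _

theorem mem_face {g S M p} : p ∈ face g S M ↔ p ∈ S ∧ g p = M := Finset.mem_filter

theorem face_add {g A B Ma Mb} (hg : Additive' g)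
    (ha : MaxAt g A Ma) (hb : MaxAt g B Mb) :
    face g (A + B) (Ma + Mb) = face g A Ma + face g B Mb := by
  ext p
  simp only [face, Finset.mem_filter, Finset.mem_add]
  constructor
  · rintro ⟨⟨a, haA, b, hbB, rfl⟩, he⟩
    rw [hg] at he
    have h1 := ha.1 a haA; have h2 := hb.1 b hbB
    exact ⟨a, ⟨haA, by omega⟩, b, ⟨hbB, by omega⟩, rfl⟩
  · rintro ⟨a, ⟨haA, hae⟩, b, ⟨hbB, hbe⟩, rfl⟩
    exact ⟨⟨a, haA, b, hbB, rfl⟩, by rw [hg]; omega⟩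

theorem face_sum {ι : Type} {g} (hg : Additive' g) (s : Finset ι)
    (S : ι → Finset (ℤ × ℤ)) (M : ι → ℤ) (h : ∀ k ∈ s, MaxAt g (S k) (M k)) :
    face g (∑ k ∈ s, S k) (∑ k ∈ s, M k) = ∑ k ∈ s, face g (S k) (M k) := by
  induction s using Finset.cons_induction with
  | empty =>
    simp only [Finset.sum_empty]
    ext p
    simp only [face, Finset.mem_filter, Finset.mem_zero]
    constructor
    · rintro ⟨rfl, -⟩; rfl
    · rintro rfl; exact ⟨rfl, hg.zero⟩
  | cons a s has ih =>
    rw [Finset.sum_cons, Finset.sum_cons, Finset.sum_cons,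
      face_add hg (h a (Finset.mem_cons_self a s))
        (maxAt_sum hg s S M fun k hk => h k (Finset.mem_cons_of_mem hk)),
      ih fun k hk => h k (Finset.mem_cons_of_mem hk)]

theorem sum_nonempty {ι : Type} (s : Finset ι) (S : ι → Finset (ℤ × ℤ))
    (h : ∀ k ∈ s, (S k).Nonempty) : (∑ k ∈ s, S k).Nonempty := by
  induction s using Finset.cons_induction with
  | empty => exact ⟨0, by simp [Finset.mem_zero]⟩
  | cons a s has ih =>
    rw [Finset.sum_cons]
    obtain ⟨x, hx⟩ := h a (Finset.mem_cons_self a s)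
    obtain ⟨y, hy⟩ := ih fun k hk => h k (Finset.mem_cons_of_mem hk)
    exact ⟨x + y, Finset.mem_add.2 ⟨x, hx, y, hy, rfl⟩⟩

/-! ### Linear functionals and hulls -/

def lin (c d : ℤ) (p : ℤ × ℤ) : ℤ := c * p.1 + d * p.2

theorem lin_additive (c d : ℤ) : Additive' (lin c d) := by
  intro a b; simp only [lin, Prod.fst_add, Prod.snd_add]; ring

theorem toR_add (a b : ℤ × ℤ) : toR (a + b) = toR a + toR b := by
  simp [toR, Prod.ext_iff]

theorem isLinearMap_linR (c d : ℤ) : IsLinearMap ℝ (fun x : V => (c : ℝ) * x.1 + d * x.2) := by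
  constructor
  · intro x y; simp only [Prod.fst_add, Prod.snd_add]; ring
  · intro r x; simp only [Prod.smul_fst, Prod.smul_snd, smul_eq_mul]; ring

theorem hull_le {c d : ℤ} {S : Finset (ℤ × ℤ)} {M : ℤ} (h : ∀ p ∈ S, lin c d p ≤ M) :
    ∀ x ∈ convexHull ℝ (toR '' ↑S), (c : ℝ) * x.1 + d * x.2 ≤ (M : ℝ) := by
  intro x hx
  have hconv : Convex ℝ {x : V | (c : ℝ) * x.1 + d * x.2 ≤ (M : ℝ)} :=
    convex_halfSpace_le (isLinearMap_linR c d) _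
  refine convexHull_min ?_ hconv hx
  rintro y ⟨p, hp, rfl⟩
  have := h p hp
  simp only [toR, Set.mem_setOf_eq]
  have : ((lin c d p : ℤ) : ℝ) ≤ (M : ℝ) := by exact_mod_cast this
  simpa [lin] using this

theorem mem_hull {S : Finset (ℤ × ℤ)} {p : ℤ × ℤ} (hp : p ∈ S) :
    toR p ∈ convexHull ℝ (toR '' ↑S) :=
  subset_convexHull ℝ _ ⟨p, by simpa using hp, rfl⟩

theorem hull_bound {c d : ℤ} {S : Finset (ℤ × ℤ)} {M : ℤ} (h : ∀ q ∈ S, lin c d q ≤ M)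
    {p : ℤ × ℤ} (hp : toR p ∈ convexHull ℝ (toR '' ↑S)) : lin c d p ≤ M := by
  have := hull_le h (toR p) hp
  simp only [toR] at this
  unfold lin; exact_mod_cast this

theorem maxAt_transfer {c d : ℤ} {S S' : Finset (ℤ × ℤ)} {M M' : ℤ}
    (h : convexHull ℝ (toR '' ↑S) = convexHull ℝ (toR '' ↑S'))
    (hM : MaxAt (lin c d) S M) (hM' : MaxAt (lin c d) S' M') : M = M' := by
  have le1 : M ≤ M' := by
    obtain ⟨p, hp, hpe⟩ := hM.2
    have := hull_bound hM'.1 (h ▸ mem_hull hp)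
    omega
  have le2 : M' ≤ M := by
    obtain ⟨p, hp, hpe⟩ := hM'.2
    have := hull_bound hM.1 (h.symm ▸ mem_hull hp)
    omega
  omega

theorem hull_sum {ι : Type} (s : Finset ι) (S : ι → Finset (ℤ × ℤ)) :
    convexHull ℝ (toR '' ↑(∑ k ∈ s, S k)) = ∑ k ∈ s, convexHull ℝ (toR '' ↑(S k)) := by
  induction s using Finset.cons_induction with
  | empty =>
    simp only [Finset.sum_empty]
    have : (toR '' ↑(0 : Finset (ℤ × ℤ))) = {(0 : V)} := by
      ext x
      simp only [Finset.coe_zero, Set.image_singleton, toR]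
      norm_num [Prod.ext_iff, toR]
    rw [this, convexHull_singleton]
    rfl
  | cons a s has ih =>
    rw [Finset.sum_cons, Finset.sum_cons, Finset.coe_add, ← ih]
    rw [show toR '' (↑(S a) + ↑(∑ k ∈ s, S k) : Set (ℤ × ℤ))
        = toR '' ↑(S a) + toR '' ↑(∑ k ∈ s, S k) from ?_, convexHull_add]
    ext x
    simp only [Set.mem_add, Set.mem_image]
    constructor
    · rintro ⟨p, ⟨u, hu, v, hv, rfl⟩, rfl⟩
      exact ⟨toR u, ⟨u, hu, rfl⟩, toR v, ⟨v, hv, rfl⟩, (toR_add u v).symm⟩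
    · rintro ⟨-, ⟨u, hu, rfl⟩, -, ⟨v, hv, rfl⟩, rfl⟩
      exact ⟨u + v, ⟨u, hu, v, hv, rfl⟩, toR_add u v⟩

/-! ### The square -/

def Vsq : Finset (ℤ × ℤ) := {(1, 0), (0, 1), (-1, 0), (0, -1)}

theorem sq18_eq : sq18 = convexHull ℝ (toR '' ↑Vsq) := by
  unfold sq18 Vsq
  congr 1
  simp only [Finset.coe_insert, Finset.coe_singleton, Set.image_insert_eq, Set.image_singleton,
    toR]
  norm_num

theorem part1 : sq18 = seg18a + seg18b := by
  unfold sq18 seg18a seg18b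
  rw [← convexHull_pair, ← convexHull_pair, ← convexHull_add]
  congr 1
  ext x
  simp only [Set.mem_add, Set.mem_insert_iff, Set.mem_singleton_iff]
  constructor
  · rintro (rfl | rfl | rfl | rfl)
    · exact ⟨(1,1), Or.inr rfl, (0,-1), Or.inl rfl, by norm_num [Prod.ext_iff]⟩
    · exact ⟨(1,1), Or.inr rfl, (-1,0), Or.inr rfl, by norm_num [Prod.ext_iff]⟩
    · exact ⟨(0,0), Or.inl rfl, (-1,0), Or.inr rfl, by norm_num [Prod.ext_iff]⟩
    · exact ⟨(0,0), Or.inl rfl, (0,-1), Or.inl rfl, by norm_num [Prod.ext_iff]⟩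
  · rintro ⟨a, (rfl | rfl), b, (rfl | rfl), rfl⟩ <;> norm_num [Prod.ext_iff]

theorem vadd_segment (t a b : V) : t +ᵥ segment ℝ a b = segment ℝ (t + a) (t + b) := by
  rw [← Set.image_vadd]
  simpa [vadd_eq_add] using segment_translate_image ℝ t a b

/-! ### Shape of the summands -/

theorem shapeA {S : Finset (ℤ × ℤ)} {Mu Mu' Mv Mv' : ℤ}
    (hMu : MaxAt (lin 1 1) S Mu) (hMu' : MaxAt (lin (-1) (-1)) S Mu')
    (hMv : MaxAt (lin 1 (-1)) S Mv) (hMv' : MaxAt (lin (-1) 1) S Mv')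
    (ha : Mu + Mu' = 2) (hb : Mv + Mv' = 0) :
    ∃ p : ℤ × ℤ, S = {p, p + (1, 1)} := by
  obtain ⟨q0, hq0, hq0e⟩ := hMu'.2
  refine ⟨q0, ?_⟩
  have hv0 : q0.1 - q0.2 = Mv := by
    have h1 := hMv.1 q0 hq0; have h2 := hMv'.1 q0 hq0
    simp only [lin] at h1 h2; omega
  have hu0 : q0.1 + q0.2 = Mu - 2 := by simp only [lin] at hq0e; omega
  ext q
  simp only [Finset.mem_insert, Finset.mem_singleton]
  constructor
  · intro hq
    have h1 := hMu.1 q hq; have h2 := hMu'.1 q hq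
    have h3 := hMv.1 q hq; have h4 := hMv'.1 q hq
    simp only [lin] at h1 h2 h3 h4
    -- q has v-coordinate Mv, u-coordinate in {Mu - 2, Mu} by parity
    have hpar : q.1 + q.2 ≡ q.1 - q.2 [ZMOD 2] := by
      unfold Int.ModEq; omega
    rcases Prod.mk.injEq .. ▸ (rfl : q = (q.1, q.2)) with _
    have : q = q0 ∨ q = q0 + (1, 1) := by
      rw [Prod.ext_iff, Prod.ext_iff]
      simp only [Prod.fst_add, Prod.snd_add]
      omega
    exact this
  · rintro (rfl | rfl)
    · exact hq0
    · obtain ⟨p1, hp1, hp1e⟩ := hMu.2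
      have h3 := hMv.1 p1 hp1; have h4 := hMv'.1 p1 hp1
      simp only [lin] at hp1e h3 h4
      have : q0 + (1, 1) = p1 := by
        rw [Prod.ext_iff]
        simp only [Prod.fst_add, Prod.snd_add]
        omega
      rw [this]; exact hp1

theorem shapeB {S : Finset (ℤ × ℤ)} {Mu Mu' Mv Mv' : ℤ}
    (hMu : MaxAt (lin 1 1) S Mu) (hMu' : MaxAt (lin (-1) (-1)) S Mu')
    (hMv : MaxAt (lin 1 (-1)) S Mv) (hMv' : MaxAt (lin (-1) 1) S Mv')
    (ha : Mu + Mu' = 0) (hb : Mv + Mv' = 2) :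
    ∃ p : ℤ × ℤ, S = {p, p + (-1, 1)} := by
  obtain ⟨q0, hq0, hq0e⟩ := hMv.2
  refine ⟨q0, ?_⟩
  have hu0 : q0.1 + q0.2 = Mu := by
    have h1 := hMu.1 q0 hq0; have h2 := hMu'.1 q0 hq0
    simp only [lin] at h1 h2; omega
  have hv0 : q0.1 - q0.2 = Mv := by simp only [lin] at hq0e; omega
  ext q
  simp only [Finset.mem_insert, Finset.mem_singleton]
  constructor
  · intro hq
    have h1 := hMu.1 q hq; have h2 := hMu'.1 q hq
    have h3 := hMv.1 q hq; have h4 := hMv'.1 q hq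
    simp only [lin] at h1 h2 h3 h4
    have : q = q0 ∨ q = q0 + (-1, 1) := by
      rw [Prod.ext_iff, Prod.ext_iff]
      simp only [Prod.fst_add, Prod.snd_add]
      omega
    exact this
  · rintro (rfl | rfl)
    · exact hq0
    · obtain ⟨p1, hp1, hp1e⟩ := hMv'.2
      have h1 := hMu.1 p1 hp1; have h2 := hMu'.1 p1 hp1
      simp only [lin] at hp1e h1 h2
      have : q0 + (-1, 1) = p1 := by
        rw [Prod.ext_iff]
        simp only [Prod.fst_add, Prod.snd_add]
        omega
      rw [this]; exact hp1

theorem hull_pair (p w : ℤ × ℤ) :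
    convexHull ℝ (toR '' ↑({p, p + w} : Finset (ℤ × ℤ))) = segment ℝ (toR p) (toR p + toR w) := by
  rw [show (↑({p, p + w} : Finset (ℤ × ℤ)) : Set (ℤ × ℤ)) = {p, p + w} by simp,
    Set.image_insert_eq, Set.image_singleton, toR_add, convexHull_pair]

theorem eqA {S : Finset (ℤ × ℤ)} {p : ℤ × ℤ} (hS : S = {p, p + (1, 1)}) :
    convexHull ℝ (toR '' ↑S) = toR p +ᵥ seg18a := by
  rw [hS, hull_pair, seg18a, vadd_segment]
  norm_num [toR]

theorem eqB {S : Finset (ℤ × ℤ)} {p : ℤ × ℤ} (hS : S = {p, p + (-1, 1)}) :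
    convexHull ℝ (toR '' ↑S) = (toR p + ((0 : ℝ), (1 : ℝ))) +ᵥ seg18b := by
  rw [hS, hull_pair, seg18b, vadd_segment]
  norm_num [toR, Prod.ext_iff]

end St18


/-- `Q₁ = conv{(0,0),(1,1)} + conv{(0,−1),(−1,0)}`, and up to translating
and reordering the summands this is the unique Minkowski decomposition of `Q₁` into
lattice polytopes none of which is a single point. -/
theorem statement18 :
    sq18 = seg18a + seg18b ∧
    ∀ (m : ℕ) (Ps : Fin (m + 1) → Set V), 1 ≤ m →
      sq18 = ∑ k, Ps k →
      (∀ k, IsLatticePolytope (Ps k)) →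
      (∀ k, ¬ ∃ x, Ps k = {x}) →
      ∃ σ : Fin (m + 1) ≃ Fin 2, ∀ k, ∃ t : V,
        Ps k = t +ᵥ (if σ k = 0 then seg18a else seg18b) := by
  refine ⟨St18.part1, ?_⟩
  intro m Ps hm hsum hlat hnp
  choose S hSne hSeq using hlat
  set T : Finset (ℤ × ℤ) := ∑ k, S k with hTdef
  have hhull : convexHull ℝ (toR '' ↑St18.Vsq) = convexHull ℝ (toR '' ↑T) := by
    rw [← St18.sq18_eq, hTdef, St18.hull_sum, hsum]
    exact Finset.sum_congr rfl fun k _ => hSeq k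
  -- every point of T is one of the five lattice points of the square
  have hfive : ∀ p ∈ T, p = (0,0) ∨ p = (1,0) ∨ p = (0,1) ∨ p = (-1,0) ∨ p = (0,-1) := by
    intro p hp
    have hmem : toR p ∈ convexHull ℝ (toR '' ↑St18.Vsq) := hhull.symm ▸ St18.mem_hull hp
    have h1 := St18.hull_bound (S := St18.Vsq) (M := 1) (c := 1) (d := 1) (by decide) hmem
    have h2 := St18.hull_bound (S := St18.Vsq) (M := 1) (c := 1) (d := -1) (by decide) hmem
    have h3 := St18.hull_bound (S := St18.Vsq) (M := 1) (c := -1) (d := 1) (by decide) hmem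
    have h4 := St18.hull_bound (S := St18.Vsq) (M := 1) (c := -1) (d := -1) (by decide) hmem
    simp only [St18.lin] at h1 h2 h3 h4
    rcases p with ⟨x, y⟩
    simp only [Prod.mk.injEq]
    omega
  have hTne : T.Nonempty := St18.sum_nonempty _ _ fun k _ => hSne k
  -- the four vertices of the square belong to T
  have hvert : ∀ c d : ℤ, St18.MaxAt (St18.lin c d) St18.Vsq 1 →
      ∃ p ∈ T, St18.lin c d p = 1 := by
    intro c d hV
    obtain ⟨M, hM⟩ := St18.exists_maxAt (St18.lin c d) hTne
    have hMe : (1 : ℤ) = M := St18.maxAt_transfer hhull hV hM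
    obtain ⟨p, hpT, hpe⟩ := hM.2
    exact ⟨p, hpT, by omega⟩
  have h10 : (1, 0) ∈ T := by
    obtain ⟨p, hpT, hpe⟩ := hvert 1 0 ⟨by decide, by decide⟩
    rcases hfive p hpT with rfl | rfl | rfl | rfl | rfl <;>
      first | exact hpT | norm_num [St18.lin] at hpe
  have h01 : (0, 1) ∈ T := by
    obtain ⟨p, hpT, hpe⟩ := hvert 0 1 ⟨by decide, by decide⟩
    rcases hfive p hpT with rfl | rfl | rfl | rfl | rfl <;>
      first | exact hpT | norm_num [St18.lin] at hpe
  have hm10 : (-1, 0) ∈ T := by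
    obtain ⟨p, hpT, hpe⟩ := hvert (-1) 0 ⟨by decide, by decide⟩
    rcases hfive p hpT with rfl | rfl | rfl | rfl | rfl <;>
      first | exact hpT | norm_num [St18.lin] at hpe
  have h0m1 : (0, -1) ∈ T := by
    obtain ⟨p, hpT, hpe⟩ := hvert 0 (-1) ⟨by decide, by decide⟩
    rcases hfive p hpT with rfl | rfl | rfl | rfl | rfl <;>
      first | exact hpT | norm_num [St18.lin] at hpe
  -- per-summand maxima in the four diagonal directions
  choose Mu hMu using fun k => St18.exists_maxAt (St18.lin 1 1) (hSne k)
  choose Mu' hMu' using fun k => St18.exists_maxAt (St18.lin (-1) (-1)) (hSne k)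
  choose Mv hMv using fun k => St18.exists_maxAt (St18.lin 1 (-1)) (hSne k)
  choose Mv' hMv' using fun k => St18.exists_maxAt (St18.lin (-1) 1) (hSne k)
  -- global maxima over T are all 1
  have hboundT : ∀ (c d : ℤ), (∀ w ∈ St18.Vsq, St18.lin c d w ≤ 1) →
      ∀ p ∈ T, St18.lin c d p ≤ 1 := fun c d hw p hp =>
    St18.hull_bound hw (hhull.symm ▸ St18.mem_hull hp)
  have hMuT : St18.MaxAt (St18.lin 1 1) T 1 :=
    ⟨hboundT 1 1 (by decide), (1, 0), h10, by decide⟩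
  have hMu'T : St18.MaxAt (St18.lin (-1) (-1)) T 1 :=
    ⟨hboundT (-1) (-1) (by decide), (-1, 0), hm10, by decide⟩
  have hMvT : St18.MaxAt (St18.lin 1 (-1)) T 1 :=
    ⟨hboundT 1 (-1) (by decide), (1, 0), h10, by decide⟩
  have hMv'T : St18.MaxAt (St18.lin (-1) 1) T 1 :=
    ⟨hboundT (-1) 1 (by decide), (0, 1), h01, by decide⟩
  have hsMu : ∑ k, Mu k = 1 := by
    refine St18.maxAt_unique ?_ hMuT
    have := St18.maxAt_sum (St18.lin_additive 1 1) Finset.univ S Mu fun k _ => hMu k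
    rwa [← hTdef] at this
  have hsMu' : ∑ k, Mu' k = 1 := by
    refine St18.maxAt_unique ?_ hMu'T
    have := St18.maxAt_sum (St18.lin_additive (-1) (-1)) Finset.univ S Mu' fun k _ => hMu' k
    rwa [← hTdef] at this
  have hsMv : ∑ k, Mv k = 1 := by
    refine St18.maxAt_unique ?_ hMvT
    have := St18.maxAt_sum (St18.lin_additive 1 (-1)) Finset.univ S Mv fun k _ => hMv k
    rwa [← hTdef] at this
  have hsMv' : ∑ k, Mv' k = 1 := by
    refine St18.maxAt_unique ?_ hMv'T
    have := St18.maxAt_sum (St18.lin_additive (-1) 1) Finset.univ S Mv' fun k _ => hMv' k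
    rwa [← hTdef] at this
  -- the u-face of T decomposes into the u-faces of the summands
  have hfaceu : St18.face (St18.lin 1 1) T 1 =
      ∑ k, St18.face (St18.lin 1 1) (S k) (Mu k) := by
    have := St18.face_sum (St18.lin_additive 1 1) Finset.univ S Mu fun k _ => hMu k
    rw [hsMu] at this
    rw [hTdef]; exact this
  have hfacev : St18.face (St18.lin 1 (-1)) T 1 =
      ∑ k, St18.face (St18.lin 1 (-1)) (S k) (Mv k) := by
    have := St18.face_sum (St18.lin_additive 1 (-1)) Finset.univ S Mv fun k _ => hMv k
    rw [hsMv] at this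
    rw [hTdef]; exact this
  -- maxima of v on the u-faces
  choose Nv hNv using fun k => St18.exists_maxAt (St18.lin 1 (-1)) (St18.face_nonempty (hMu k))
  choose Nv' hNv' using fun k => St18.exists_maxAt (St18.lin (-1) 1) (St18.face_nonempty (hMu k))
  choose Nu hNu using fun k => St18.exists_maxAt (St18.lin 1 1) (St18.face_nonempty (hMv k))
  choose Nu' hNu' using fun k => St18.exists_maxAt (St18.lin (-1) (-1)) (St18.face_nonempty (hMv k))
  have hfu_sub : ∀ q ∈ St18.face (St18.lin 1 1) T 1, q = (1, 0) ∨ q = (0, 1) := by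
    intro q hq
    obtain ⟨hqT, hqe⟩ := St18.mem_face.1 hq
    rcases hfive q hqT with rfl | rfl | rfl | rfl | rfl <;> revert hqe <;> decide
  have hfv_sub : ∀ q ∈ St18.face (St18.lin 1 (-1)) T 1, q = (1, 0) ∨ q = (0, -1) := by
    intro q hq
    obtain ⟨hqT, hqe⟩ := St18.mem_face.1 hq
    rcases hfive q hqT with rfl | rfl | rfl | rfl | rfl <;> revert hqe <;> decide
  have hNvT : St18.MaxAt (St18.lin 1 (-1)) (St18.face (St18.lin 1 1) T 1) 1 := by
    refine ⟨fun q hq => ?_, (1, 0), St18.mem_face.2 ⟨h10, by decide⟩, by decide⟩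
    rcases hfu_sub q hq with rfl | rfl <;> decide
  have hNv'T : St18.MaxAt (St18.lin (-1) 1) (St18.face (St18.lin 1 1) T 1) 1 := by
    refine ⟨fun q hq => ?_, (0, 1), St18.mem_face.2 ⟨h01, by decide⟩, by decide⟩
    rcases hfu_sub q hq with rfl | rfl <;> decide
  have hNuT : St18.MaxAt (St18.lin 1 1) (St18.face (St18.lin 1 (-1)) T 1) 1 := by
    refine ⟨fun q hq => ?_, (1, 0), St18.mem_face.2 ⟨h10, by decide⟩, by decide⟩
    rcases hfv_sub q hq with rfl | rfl <;> decide
  have hNu'T : St18.MaxAt (St18.lin (-1) (-1)) (St18.face (St18.lin 1 (-1)) T 1) 1 := by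
    refine ⟨fun q hq => ?_, (0, -1), St18.mem_face.2 ⟨h0m1, by decide⟩, by decide⟩
    rcases hfv_sub q hq with rfl | rfl <;> decide
  have hsNv : ∑ k, Nv k = 1 := by
    refine St18.maxAt_unique ?_ hNvT
    have := St18.maxAt_sum (St18.lin_additive 1 (-1)) Finset.univ _ Nv fun k _ => hNv k
    rwa [← hfaceu] at this
  have hsNv' : ∑ k, Nv' k = 1 := by
    refine St18.maxAt_unique ?_ hNv'T
    have := St18.maxAt_sum (St18.lin_additive (-1) 1) Finset.univ _ Nv' fun k _ => hNv' k
    rwa [← hfaceu] at this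
  have hsNu : ∑ k, Nu k = 1 := by
    refine St18.maxAt_unique ?_ hNuT
    have := St18.maxAt_sum (St18.lin_additive 1 1) Finset.univ _ Nu fun k _ => hNu k
    rwa [← hfacev] at this
  have hsNu' : ∑ k, Nu' k = 1 := by
    refine St18.maxAt_unique ?_ hNu'T
    have := St18.maxAt_sum (St18.lin_additive (-1) (-1)) Finset.univ _ Nu' fun k _ => hNu' k
    rwa [← hfacev] at this
  -- termwise equality of face widths with total widths
  have hNvle : ∀ k, Nv k + Nv' k ≤ Mv k + Mv' k := by
    intro k
    obtain ⟨p, hp, hpe⟩ := (hNv k).2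
    obtain ⟨q, hq, hqe⟩ := (hNv' k).2
    have h1 := (hMv k).1 p (St18.face_subset hp)
    have h2 := (hMv' k).1 q (St18.face_subset hq)
    omega
  have hNule : ∀ k, Nu k + Nu' k ≤ Mu k + Mu' k := by
    intro k
    obtain ⟨p, hp, hpe⟩ := (hNu k).2
    obtain ⟨q, hq, hqe⟩ := (hNu' k).2
    have h1 := (hMu k).1 p (St18.face_subset hp)
    have h2 := (hMu' k).1 q (St18.face_subset hq)
    omega
  have hkeyv : ∀ k, Nv k + Nv' k = Mv k + Mv' k := by
    have hl : ∑ k, (Nv k + Nv' k) = ∑ k, (Mv k + Mv' k) := by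
      rw [Finset.sum_add_distrib, Finset.sum_add_distrib, hsNv, hsNv', hsMv, hsMv']
    have := (Finset.sum_eq_sum_iff_of_le fun k _ => hNvle k).1 hl
    exact fun k => this k (Finset.mem_univ k)
  have hkeyu : ∀ k, Nu k + Nu' k = Mu k + Mu' k := by
    have hl : ∑ k, (Nu k + Nu' k) = ∑ k, (Mu k + Mu' k) := by
      rw [Finset.sum_add_distrib, Finset.sum_add_distrib, hsNu, hsNu', hsMu, hsMu']
    have := (Finset.sum_eq_sum_iff_of_le fun k _ => hNule k).1 hl
    exact fun k => this k (Finset.mem_univ k)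
  -- parity : both widths are even
  have hbdvd : ∀ k, 2 ∣ (Mv k + Mv' k) := by
    intro k
    obtain ⟨p, hp, hpe⟩ := (hNv k).2
    obtain ⟨q, hq, hqe⟩ := (hNv' k).2
    have hpu := (St18.mem_face.1 hp).2
    have hqu := (St18.mem_face.1 hq).2
    have hk := hkeyv k
    simp only [St18.lin] at hpe hqe hpu hqu
    omega
  have hadvd : ∀ k, 2 ∣ (Mu k + Mu' k) := by
    intro k
    obtain ⟨p, hp, hpe⟩ := (hNu k).2
    obtain ⟨q, hq, hqe⟩ := (hNu' k).2
    have hpv := (St18.mem_face.1 hp).2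
    have hqv := (St18.mem_face.1 hq).2
    have hk := hkeyu k
    simp only [St18.lin] at hpe hqe hpv hqv
    omega
  -- widths are nonnegative
  have hann : ∀ k, 0 ≤ Mu k + Mu' k := by
    intro k
    obtain ⟨p, hp, hpe⟩ := (hMu k).2
    have h1 := (hMu' k).1 p hp
    simp only [St18.lin] at hpe h1
    omega
  have hbnn : ∀ k, 0 ≤ Mv k + Mv' k := by
    intro k
    obtain ⟨p, hp, hpe⟩ := (hMv k).2
    have h1 := (hMv' k).1 p hp
    simp only [St18.lin] at hpe h1
    omega
  -- none of the summands is a point : total width at least 1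
  have hpos : ∀ k, 1 ≤ (Mu k + Mu' k) + (Mv k + Mv' k) := by
    intro k
    by_contra hcon
    push_neg at hcon
    have ha0 : Mu k + Mu' k = 0 := by have := hann k; have := hbnn k; omega
    have hb0 : Mv k + Mv' k = 0 := by have := hann k; have := hbnn k; omega
    obtain ⟨p0, hp0, hp0e⟩ := (hMu k).2
    have h5 := (hMv k).1 p0 hp0
    have h6 := (hMv' k).1 p0 hp0
    have hallx : ∀ q ∈ S k, q = p0 := by
      intro q hq
      have h1 := (hMu k).1 q hq
      have h2 := (hMu' k).1 q hq
      have h3 := (hMv k).1 q hq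
      have h4 := (hMv' k).1 q hq
      simp only [St18.lin] at h1 h2 h3 h4 h5 h6 hp0e
      rw [Prod.ext_iff]
      omega
    have hSk : S k = {p0} := Finset.eq_singleton_iff_unique_mem.2 ⟨hp0, hallx⟩
    exact hnp k ⟨toR p0, by rw [hSeq k, hSk]; simp⟩
  -- there are exactly two summands
  have hs4 : ∑ k, ((Mu k + Mu' k) + (Mv k + Mv' k)) = 4 := by
    rw [Finset.sum_add_distrib, Finset.sum_add_distrib, Finset.sum_add_distrib,
      hsMu, hsMu', hsMv, hsMv']
    norm_num
  have hcard : ((m : ℤ) + 1) * 2 ≤ 4 := by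
    calc ((m : ℤ) + 1) * 2 = ∑ _k : Fin (m + 1), (2 : ℤ) := by
          rw [Finset.sum_const, Finset.card_univ, Fintype.card_fin, nsmul_eq_mul]
          push_cast; ring
      _ ≤ ∑ k, ((Mu k + Mu' k) + (Mv k + Mv' k)) := by
          refine Finset.sum_le_sum fun k _ => ?_
          have := hpos k; have := hadvd k; have := hbdvd k
          omega
      _ = 4 := hs4
  obtain rfl : m = 1 := by omega
  -- identify the two summands
  have hsa : (Mu 0 + Mu' 0) + (Mu 1 + Mu' 1) = 2 := by
    have h1 : ∑ k : Fin 2, (Mu k + Mu' k) = 2 := by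
      rw [Finset.sum_add_distrib, hsMu, hsMu']; norm_num
    rw [Fin.sum_univ_two] at h1
    exact h1
  have hsb : (Mv 0 + Mv' 0) + (Mv 1 + Mv' 1) = 2 := by
    have h1 : ∑ k : Fin 2, (Mv k + Mv' k) = 2 := by
      rw [Finset.sum_add_distrib, hsMv, hsMv']; norm_num
    rw [Fin.sum_univ_two] at h1
    exact h1
  have hcases : ∀ k : Fin 2,
      (Mu k + Mu' k = 2 ∧ Mv k + Mv' k = 0) ∨ (Mu k + Mu' k = 0 ∧ Mv k + Mv' k = 2) := by
    have e0 := hpos 0; have e1 := hpos 1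
    have f0 := hadvd 0; have f1 := hadvd 1
    have g0 := hbdvd 0; have g1 := hbdvd 1
    have i0 := hann 0; have i1 := hann 1
    have j0 := hbnn 0; have j1 := hbnn 1
    exact Fin.forall_fin_two.2 ⟨by omega, by omega⟩
  rcases hcases 0 with ⟨h1, h2⟩ | ⟨h1, h2⟩
  · -- summand 0 is a translate of seg18a, summand 1 of seg18b
    have h34 : Mu 1 + Mu' 1 = 0 ∧ Mv 1 + Mv' 1 = 2 := by
      rcases hcases 1 with ⟨h3, h4⟩ | ⟨h3, h4⟩ <;> omega
    obtain ⟨p0, hp0⟩ := St18.shapeA (hMu 0) (hMu' 0) (hMv 0) (hMv' 0) h1 h2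
    obtain ⟨p1, hp1⟩ := St18.shapeB (hMu 1) (hMu' 1) (hMv 1) (hMv' 1) h34.1 h34.2
    refine ⟨Equiv.refl _, Fin.forall_fin_two.2 ⟨⟨toR p0, ?_⟩, ⟨toR p1 + ((0:ℝ), (1:ℝ)), ?_⟩⟩⟩
    · rw [hSeq 0, St18.eqA hp0]
      simp
    · rw [hSeq 1, St18.eqB hp1]
      simp
  · -- summand 0 is a translate of seg18b, summand 1 of seg18a
    have h34 : Mu 1 + Mu' 1 = 2 ∧ Mv 1 + Mv' 1 = 0 := by
      rcases hcases 1 with ⟨h3, h4⟩ | ⟨h3, h4⟩ <;> omega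
    obtain ⟨p0, hp0⟩ := St18.shapeB (hMu 0) (hMu' 0) (hMv 0) (hMv' 0) h1 h2
    obtain ⟨p1, hp1⟩ := St18.shapeA (hMu 1) (hMu' 1) (hMv 1) (hMv' 1) h34.1 h34.2
    refine ⟨Equiv.swap 0 1, Fin.forall_fin_two.2
      ⟨⟨toR p0 + ((0:ℝ), (1:ℝ)), ?_⟩, ⟨toR p1, ?_⟩⟩⟩
    · rw [hSeq 0, St18.eqB hp0]
      simp [Equiv.swap_apply_left]
    · rw [hSeq 1, St18.eqA hp1]
      simp [Equiv.swap_apply_right]
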